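/- For every integer n ≥ 4, the alternating sum Σ_{k=2}^{n} (−1)^{k+1} · c_k is strictly negative, where c_k = (2^{k−1}/k!) · (k−1). -/

import Mathlib

/-- `c k = (2^{k−1}/k!) (k−1)` for an integer `k ≥ 1`. -/
noncomputable def cseq (k : ℕ) : ℝ :=
  (2 ^ (k - 1) / (Nat.factorial k : ℝ)) * ((k : ℝ) - 1)

lemma cseq_nonneg (k : ℕ) (hk : 1 ≤ k) : 0 ≤ cseq k := by
  unfold cseq
  apply mul_nonneg
  · positivity
  · have : (1:ℝ) ≤ k := by exact_mod_cast hk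
    linarith

lemma cseq_succ_le (k : ℕ) (hk : 3 ≤ k) : cseq (k + 1) ≤ cseq k := by
  obtain ⟨m, rfl⟩ := Nat.exists_eq_add_of_le hk
  unfold cseq
  have h1 : (3 + m + 1) - 1 = m + 3 := by omega
  have h2 : (3 + m) - 1 = m + 2 := by omega
  rw [h1, h2, show 3 + m + 1 = (3 + m) + 1 from rfl, Nat.factorial_succ]
  have hf : (0:ℝ) < (Nat.factorial (3 + m) : ℝ) := by positivity
  have hm : (0:ℝ) ≤ (m:ℝ) := Nat.cast_nonneg m
  push_cast
  rw [div_mul_eq_mul_div, div_mul_eq_mul_div, div_le_div_iff₀ (by positivity) hf]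
  have hpow : (0:ℝ) < 2 ^ (m + 2) := by positivity
  have : (2:ℝ) ^ (m + 3) = 2 * 2 ^ (m + 2) := by ring
  rw [this]
  nlinarith [mul_pos hpow hf, mul_nonneg (mul_nonneg hm hpow.le) hf.le,
    mul_nonneg (mul_nonneg (mul_nonneg hm hm) hpow.le) hf.le]

lemma key (n : ℕ) (hn : 4 ≤ n) :
    (∑ k ∈ Finset.Icc 2 n, (-1 : ℝ) ^ (k + 1) * cseq k < 0) ∧
    (∑ k ∈ Finset.Icc 2 (n + 1), (-1 : ℝ) ^ (k + 1) * cseq k < 0) := by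
  induction n, hn using Nat.le_induction with
  | base =>
      constructor
      · rw [show Finset.Icc 2 4 = {2, 3, 4} from by decide]
        norm_num [cseq, Nat.factorial]
      · rw [show Finset.Icc 2 5 = {2, 3, 4, 5} from by decide]
        norm_num [cseq, Nat.factorial]
  | succ n hn ih =>
      refine ⟨ih.2, ?_⟩
      have hstep : ∀ m : ℕ, 1 ≤ m →
          ∑ k ∈ Finset.Icc 2 (m + 1), (-1 : ℝ) ^ (k + 1) * cseq k
          = (∑ k ∈ Finset.Icc 2 m, (-1 : ℝ) ^ (k + 1) * cseq k)
            + (-1 : ℝ) ^ (m + 2) * cseq (m + 1) := by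
        intro m hm
        rw [Finset.sum_Icc_succ_top (by omega)]
      rcases Nat.even_or_odd n with he | ho
      · -- n even, so the term at n+2 has sign (-1)^(n+3) = -1
        rw [hstep (n + 1) (by omega)]
        have hsign : (-1 : ℝ) ^ (n + 1 + 2) = -1 := by
          rcases he with ⟨t, rfl⟩
          rw [show t + t + 1 + 2 = 2 * t + 3 from by ring]
          norm_num [pow_add, pow_mul]
        rw [hsign]
        have hc := cseq_nonneg (n + 2) (by omega)
        have := ih.2
        nlinarith
      · -- n odd: S_{n+2} = S_n - c_{n+1} + c_{n+2} ≤ S_n < 0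
        rw [hstep (n + 1) (by omega), hstep n (by omega)]
        have hs1 : (-1 : ℝ) ^ (n + 2) = -1 := by
          rcases ho with ⟨t, rfl⟩
          rw [show 2 * t + 1 + 2 = 2 * (t + 1) + 1 from by ring]
          norm_num [pow_add, pow_mul]
        have hs2 : (-1 : ℝ) ^ (n + 1 + 2) = 1 := by
          rcases ho with ⟨t, rfl⟩
          rw [show 2 * t + 1 + 1 + 2 = 2 * (t + 2) from by ring]
          simp [pow_mul]
        rw [hs1, hs2]
        have hmono := cseq_succ_le (n + 1) (by omega)
        have := ih.1
        nlinarith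

/-- For every `n ≥ 4`, the alternating sum `Σ_{k=2}^{n} (−1)^{k+1} c_k` is strictly
negative. -/
theorem alternating_sum_c_neg (n : ℕ) (hn : 4 ≤ n) :
    ∑ k ∈ Finset.Icc 2 n, (-1 : ℝ) ^ (k + 1) * cseq k < 0 := by
  exact (key n hn).1
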